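/- For every finite rooted tree T there exist a finite fan S and an epimorphism φ : S → T; that is, the family of finite fans is coinitial in the family of finite rooted trees. -/

import Mathlib

/-- A finite rooted tree: a finite partial order with a least element (the root) in which
the set of predecessors of any element is linearly ordered. -/
structure FiniteRootedTree where
  carrier : Type
  [fintype : Fintype carrier]
  [po : PartialOrder carrier]
  [bot : OrderBot carrier]
  chains : ∀ t : carrier, IsChain (· ≤ ·) {s | s ≤ t}

attribute [instance] FiniteRootedTree.fintype FiniteRootedTree.po FiniteRootedTree.bot

/-- `R^T(s,t)` iff `s = t` or `t` is an immediate successor of `s` (i.e. `t` covers `s`). -/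
def FiniteRootedTree.R (T : FiniteRootedTree) (s t : T.carrier) : Prop := s = t ∨ s ⋖ t

/-- An epimorphism between finite rooted trees: a surjection that preserves the
relation `R` and lifts related pairs. -/
def IsTreeEpi (S T : FiniteRootedTree) (φ : S.carrier → T.carrier) : Prop :=
  Function.Surjective φ ∧
  (∀ s s' : S.carrier, S.R s s' → T.R (φ s) (φ s')) ∧
  (∀ t t' : T.carrier, T.R t t' → ∃ s s' : S.carrier, φ s = t ∧ φ s' = t' ∧ S.R s s')

/-- A fan: a finite rooted tree in which any common `R`-predecessor of two incomparable
points (other than the points themselves) is the root, and all branches (maximal chains)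
have the same number of elements. -/
def IsFan (T : FiniteRootedTree) : Prop :=
  (∀ s t p : T.carrier, ¬ s ≤ t → ¬ t ≤ s → p ≠ s → p ≠ t → T.R p s → T.R p t → p = ⊥) ∧
  (∀ b₁ b₂ : Set T.carrier, IsMaxChain (· ≤ ·) b₁ → IsMaxChain (· ≤ ·) b₂ →
    b₁.ncard = b₂.ncard)

namespace FansAux

variable (T : FiniteRootedTree)

noncomputable local instance chainLO (m : T.carrier) :
    LinearOrder {s : T.carrier // s ≤ m} :=
  { (inferInstance : PartialOrder {s : T.carrier // s ≤ m}) with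
    le_total := fun a b => by
      rcases eq_or_ne a b with h | h
      · exact Or.inl h.le
      · exact T.chains m a.2 b.2 (fun hh => h (Subtype.ext hh))
    toDecidableLE := Classical.decRel _ }

noncomputable local instance (m : T.carrier) : Fintype {s : T.carrier // s ≤ m} :=
  Fintype.ofFinite _

/-- size of the chain below `m` -/
noncomputable def n (m : T.carrier) : ℕ := Fintype.card {s : T.carrier // s ≤ m}

lemma npos (m : T.carrier) : 0 < n T m :=
  Fintype.card_pos_iff.mpr ⟨⟨⊥, bot_le⟩⟩

noncomputable def e (m : T.carrier) : Fin (n T m) ≃o {s : T.carrier // s ≤ m} :=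
  monoEquivOfFin _ rfl

lemma sub_le {m : T.carrier} {a b : {s : T.carrier // s ≤ m}} (h : a.1 ≤ b.1) : a ≤ b := h
lemma sub_le' {m : T.carrier} {a b : {s : T.carrier // s ≤ m}} (h : a ≤ b) : a.1 ≤ b.1 := h
lemma sub_lt {m : T.carrier} {a b : {s : T.carrier // s ≤ m}} (h : a.1 < b.1) : a < b := h
lemma sub_lt' {m : T.carrier} {a b : {s : T.carrier // s ≤ m}} (h : a < b) : a.1 < b.1 := h

lemma e_zero (m : T.carrier) (k : Fin (n T m)) (hk : k.1 = 0) : ((e T m) k).1 = ⊥ := by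
  have h1 : k ≤ (e T m).symm ⟨⊥, bot_le⟩ := by
    show k.1 ≤ ((e T m).symm ⟨⊥, bot_le⟩).1
    omega
  have h2 : (e T m) k ≤ ⟨⊥, bot_le⟩ := by
    have h3 := (e T m).monotone h1
    rwa [OrderIso.apply_symm_apply] at h3
  exact le_bot_iff.mp (sub_le' T h2)

lemma e_top (m : T.carrier) (k : Fin (n T m)) (hk : k.1 = n T m - 1) :
    ((e T m) k).1 = m := by
  have h1 : (e T m).symm ⟨m, le_rfl⟩ ≤ k := by
    have h2 : ((e T m).symm ⟨m, le_rfl⟩).1 < n T m := ((e T m).symm ⟨m, le_rfl⟩).2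
    show ((e T m).symm ⟨m, le_rfl⟩).1 ≤ k.1
    omega
  have h2 : (⟨m, le_rfl⟩ : {s : T.carrier // s ≤ m}) ≤ (e T m) k := by
    have h3 := (e T m).monotone h1
    rwa [OrderIso.apply_symm_apply] at h3
  exact le_antisymm ((e T m) k).2 (sub_le' T h2)

/-- covers in the chain subtype descend to covers in `T` -/
lemma cov_sub {m : T.carrier} {a b : {s : T.carrier // s ≤ m}} (h : a ⋖ b) : a.1 ⋖ b.1 := by
  refine ⟨sub_lt' T h.1, fun x hax hxb => ?_⟩
  exact h.2 (c := ⟨x, hxb.le.trans b.2⟩) (sub_lt T hax) (sub_lt T hxb)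

lemma cov_sub' {m : T.carrier} {a b : {s : T.carrier // s ≤ m}} (h : a.1 ⋖ b.1) : a ⋖ b := by
  refine ⟨sub_lt T h.1, fun c hac hcb => ?_⟩
  exact h.2 (sub_lt' T hac) (sub_lt' T hcb)

lemma fin_cov {nn : ℕ} {a b : Fin nn} (h : a.1 + 1 = b.1) : a ⋖ b := by
  refine ⟨show a.1 < b.1 by omega, fun c hac hcb => ?_⟩
  have h1 : a.1 < c.1 := hac
  have h2 : c.1 < b.1 := hcb
  omega

lemma fin_cov' {nn : ℕ} {a b : Fin nn} (h : a ⋖ b) : a.1 + 1 = b.1 := by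
  have h1 : a.1 < b.1 := h.1
  by_contra hne
  have hlt : a.1 + 1 < nn := by have := b.2; omega
  exact h.2 (c := ⟨a.1 + 1, hlt⟩) (show a.1 < a.1 + 1 by omega) (show a.1 + 1 < b.1 by omega)

lemma consec (m : T.carrier) (a b : Fin (n T m)) (h : a.1 + 1 = b.1) :
    ((e T m) a).1 ⋖ ((e T m) b).1 :=
  cov_sub T ((apply_covBy_apply_iff (e T m)).mpr (fin_cov h))

lemma consec' (m : T.carrier) {t t' : T.carrier} (h : t ⋖ t') (ht : t ≤ m) (ht' : t' ≤ m) :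
    ((e T m).symm ⟨t, ht⟩).1 + 1 = ((e T m).symm ⟨t', ht'⟩).1 := by
  have h1 : (⟨t, ht⟩ : {s : T.carrier // s ≤ m}) ⋖ ⟨t', ht'⟩ := cov_sub' T h
  exact fin_cov' ((apply_covBy_apply_iff (e T m).symm).mpr h1)

/-- the common length of the branches of the fan -/
noncomputable def L : ℕ := Fintype.card T.carrier

lemma Lpos : 0 < L T := Fintype.card_pos_iff.mpr ⟨⊥⟩

lemma n_le_L (m : T.carrier) : n T m ≤ L T :=
  Fintype.card_le_of_injective Subtype.val Subtype.val_injective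

/-- points of the fan other than the root -/
def Pt := T.carrier × Fin (L T)

instance : PartialOrder (Pt T) where
  le a b := a.1 = b.1 ∧ a.2 ≤ b.2
  le_refl a := ⟨rfl, le_rfl⟩
  le_trans a b c h1 h2 := ⟨h1.1.trans h2.1, h1.2.trans h2.2⟩
  le_antisymm a b h1 h2 := by
    obtain ⟨a1, a2⟩ := a; obtain ⟨b1, b2⟩ := b
    cases h1.1
    exact congrArg _ (le_antisymm h1.2 h2.2)

lemma pt_le_iff {a b : Pt T} : a ≤ b ↔ a.1 = b.1 ∧ a.2 ≤ b.2 := Iff.rfl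

instance : Finite (Pt T) := inferInstanceAs (Finite (T.carrier × Fin (L T)))

noncomputable instance : Fintype (Pt T) := Fintype.ofFinite _

/-- the carrier of the fan -/
abbrev Ct := WithBot (Pt T)

instance : Finite (Ct T) := inferInstanceAs (Finite (Option (Pt T)))

noncomputable instance : Fintype (Ct T) := Fintype.ofFinite _

lemma ct_chains : ∀ x : Ct T, IsChain (· ≤ ·) {y | y ≤ x} := by
  intro x y hy z hz _
  match y, z with
  | ⊥, z => exact Or.inl bot_le
  | y, ⊥ => exact Or.inr bot_le
  | (a : Pt T), (b : Pt T) =>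
    match x with
    | ⊥ =>
      have hy' : WithBot.some a ≤ (⊥ : Ct T) := hy
      exact absurd hy' (by simp)
    | (c : Pt T) =>
      have ha := (pt_le_iff T).mp (WithBot.coe_le_coe.mp hy)
      have hb := (pt_le_iff T).mp (WithBot.coe_le_coe.mp hz)
      have h1 : a.1 = b.1 := ha.1.trans hb.1.symm
      rcases le_total a.2 b.2 with h | h
      · exact Or.inl (WithBot.coe_le_coe.mpr ⟨h1, h⟩)
      · exact Or.inr (WithBot.coe_le_coe.mpr ⟨h1.symm, h⟩)

/-- the fan -/
noncomputable def S : FiniteRootedTree :=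
  { carrier := Ct T, chains := ct_chains T }

lemma pt_lt {a b : Pt T} (h1 : a.1 = b.1) (h2 : a.2.1 < b.2.1) :
    (WithBot.some a : Ct T) < WithBot.some b := by
  refine WithBot.coe_lt_coe.mpr (lt_of_le_of_ne ⟨h1, le_of_lt h2⟩ fun hh => ?_)
  rw [hh] at h2
  exact absurd h2 (lt_irrefl _)

lemma lt_pt {p q : Pt T} (h : (WithBot.some p : Ct T) < WithBot.some q) :
    p.1 = q.1 ∧ p.2.1 < q.2.1 := by
  have hle := (pt_le_iff T).mp (WithBot.coe_le_coe.mp h.le)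
  refine ⟨hle.1, ?_⟩
  have hne : p ≠ q := fun hh => h.ne (by rw [hh])
  have h3 : p.2.1 ≠ q.2.1 := fun hh => by
    obtain ⟨p1, p2⟩ := p; obtain ⟨q1, q2⟩ := q
    exact hne (by cases hle.1; cases Fin.ext hh; rfl)
  have h2 : p.2.1 ≤ q.2.1 := hle.2
  omega

lemma cov_bot_pt (m : T.carrier) (i : Fin (L T)) (hi : i.1 = 0) :
    (⊥ : Ct T) ⋖ WithBot.some (m, i) := by
  refine ⟨WithBot.bot_lt_coe _, fun c h1 h2 => ?_⟩
  match c with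
  | ⊥ => exact absurd rfl h1.ne
  | (p : Pt T) =>
    have hp := lt_pt T h2
    have h5 : p.2.1 < i.1 := hp.2
    omega

lemma cov_succ_pt (m : T.carrier) (i j : Fin (L T)) (hij : i.1 + 1 = j.1) :
    (WithBot.some ((m, i) : Pt T) : Ct T) ⋖ WithBot.some ((m, j) : Pt T) := by
  refine ⟨pt_lt T rfl (show i.1 < j.1 by omega), fun c h1 h2 => ?_⟩
  match c with
  | ⊥ =>
    have : ¬ (WithBot.some ((m, i) : Pt T) : Ct T) < ⊥ := by simp
    exact this h1
  | (p : Pt T) =>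
    have ha := lt_pt T h1
    have hb := lt_pt T h2
    have h5 : i.1 < p.2.1 := ha.2
    have h6 : p.2.1 < j.1 := hb.2
    omega

noncomputable def idx (m : T.carrier) (iv : ℕ) : Fin (n T m) :=
  ⟨min (iv + 1) (n T m - 1), by have := npos T m; omega⟩

noncomputable def phi : Ct T → T.carrier := fun x =>
  match x with
  | ⊥ => ⊥
  | (p : Pt T) => ((e T p.1) (idx T p.1 p.2.1)).1

lemma phi_bot : phi T ⊥ = ⊥ := rfl

lemma phi_coe (p : Pt T) : phi T (WithBot.some p) = ((e T p.1) (idx T p.1 p.2.1)).1 := rfl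

lemma phi_at (m : T.carrier) (iv : ℕ) (hiv : iv < L T) (k : Fin (n T m)) (hk : iv + 1 = k.1) :
    phi T (WithBot.some ((m, ⟨iv, hiv⟩) : Pt T)) = ((e T m) k).1 := by
  show ((e T m) (idx T m iv)).1 = _
  have hidx : idx T m iv = k := by
    apply Fin.ext
    show min (iv + 1) (n T m - 1) = k.1
    have := k.2
    omega
  rw [hidx]

/-- surjectivity of `phi` -/
lemma phi_surj : Function.Surjective (phi T) := by
  intro t
  refine ⟨WithBot.some ((t, ⟨L T - 1, by have := Lpos T; omega⟩) : Pt T), ?_⟩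
  show ((e T t) (idx T t (L T - 1))).1 = t
  apply e_top
  show min ((L T - 1) + 1) (n T t - 1) = n T t - 1
  have h1 := n_le_L T t
  have h2 := npos T t
  have h3 := Lpos T
  omega

/-- fan condition 1 -/
lemma fan1 : ∀ s t p : Ct T, ¬ s ≤ t → ¬ t ≤ s → p ≠ s → p ≠ t →
    (p = s ∨ p ⋖ s) → (p = t ∨ p ⋖ t) → p = ⊥ := by
  intro s t p hst hts hps hpt hRs hRt
  rcases hRs with h | h; · exact absurd h hps
  rcases hRt with h' | h'; · exact absurd h' hpt
  match p with
  | ⊥ => rfl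
  | (pp : Pt T) =>
    exfalso
    match s, t with
    | ⊥, _ =>
      have : ¬ (WithBot.some pp : Ct T) < ⊥ := by simp
      exact this h.1
    | _, ⊥ =>
      have : ¬ (WithBot.some pp : Ct T) < ⊥ := by simp
      exact this h'.1
    | (q : Pt T), (q' : Pt T) =>
      have h1 := lt_pt T h.1
      have h2 := lt_pt T h'.1
      have hqq : q.1 = q'.1 := h1.1.symm.trans h2.1
      rcases le_total q.2 q'.2 with hh | hh
      · exact hst (WithBot.coe_le_coe.mpr ⟨hqq, hh⟩)
      · exact hts (WithBot.coe_le_coe.mpr ⟨hqq.symm, hh⟩)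

noncomputable def g (m : T.carrier) : Option (Fin (L T)) → Ct T := fun o =>
  o.elim ⊥ (fun i => WithBot.some (m, i))

lemma g_inj (m : T.carrier) : Function.Injective (g T m) := by
  intro o1 o2 h
  match o1, o2 with
  | none, none => rfl
  | none, some i => exact absurd h (WithBot.bot_ne_coe (a := ((m, i) : Pt T)))
  | some i, none => exact absurd h (WithBot.coe_ne_bot (a := ((m, i) : Pt T)))
  | some i, some j =>
    have h1 : ((m, i) : Pt T) = (m, j) := Option.some.inj h
    have h2 : i = j := (Prod.ext_iff.mp h1).2
    rw [h2]

/-- a branch of the fan -/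
noncomputable def B (m : T.carrier) : Set (Ct T) := Set.range (g T m)

lemma B_chain (m : T.carrier) : IsChain (· ≤ ·) (B T m) := by
  rintro x ⟨o1, rfl⟩ y ⟨o2, rfl⟩ hne
  match o1, o2 with
  | none, o2 => exact Or.inl bot_le
  | o1, none => exact Or.inr bot_le
  | some i, some j =>
    rcases le_total i j with h | h
    · exact Or.inl (WithBot.coe_le_coe.mpr ⟨rfl, h⟩)
    · exact Or.inr (WithBot.coe_le_coe.mpr ⟨rfl, h⟩)

lemma maxchain_B (b : Set (Ct T)) (hb : IsMaxChain (· ≤ ·) b) : ∃ m, b = B T m := by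
  obtain ⟨hchain, hmax⟩ := hb
  by_cases hex : ∃ p : Pt T, WithBot.some p ∈ b
  · obtain ⟨p, hp⟩ := hex
    refine ⟨p.1, hmax (B_chain T p.1) ?_⟩
    intro x hx
    match x with
    | ⊥ => exact ⟨none, rfl⟩
    | (q : Pt T) =>
      have hq1 : q.1 = p.1 := by
        rcases eq_or_ne (WithBot.some q : Ct T) (WithBot.some p) with hh | hh
        · rw [Option.some.inj hh]
        · rcases hchain hx hp hh with hle | hle
          · exact ((pt_le_iff T).mp (WithBot.coe_le_coe.mp hle)).1
          · exact (((pt_le_iff T).mp (WithBot.coe_le_coe.mp hle)).1).symm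
      refine ⟨some q.2, ?_⟩
      show WithBot.some ((p.1, q.2) : Pt T) = WithBot.some q
      rw [← hq1]
      rfl
  · refine ⟨⊥, hmax (B_chain T ⊥) ?_⟩
    intro x hx
    match x with
    | ⊥ => exact ⟨none, rfl⟩
    | (q : Pt T) => exact absurd ⟨q, hx⟩ hex

/-- fan condition 2 -/
lemma fan2 : ∀ b₁ b₂ : Set (Ct T), IsMaxChain (· ≤ ·) b₁ → IsMaxChain (· ≤ ·) b₂ →
    b₁.ncard = b₂.ncard := by
  intro b1 b2 h1 h2
  obtain ⟨m1, rfl⟩ := maxchain_B T b1 h1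
  obtain ⟨m2, rfl⟩ := maxchain_B T b2 h2
  rw [B, B, ← Set.image_univ, ← Set.image_univ,
    Set.ncard_image_of_injective _ (g_inj T m1), Set.ncard_image_of_injective _ (g_inj T m2)]

/-- `R`-preservation -/
lemma pres : ∀ s s' : Ct T, (s = s' ∨ s ⋖ s') → (phi T s = phi T s' ∨ phi T s ⋖ phi T s') := by
  intro s s' h
  rcases h with rfl | h
  · exact Or.inl rfl
  match s, s' with
  | s, ⊥ =>
    have : ¬ s < (⊥ : Ct T) := by simp
    exact absurd h.1 this
  | ⊥, (q : Pt T) =>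
    obtain ⟨qm, qi⟩ := q
    have hq2 : qi.1 = 0 := by
      by_contra h0
      exact h.2 (c := WithBot.some ((qm, ⟨0, Lpos T⟩) : Pt T))
        (WithBot.bot_lt_coe _) (pt_lt T rfl (by simpa using Nat.pos_of_ne_zero h0))
    show ⊥ = ((e T qm) (idx T qm qi.1)).1 ∨ ⊥ ⋖ ((e T qm) (idx T qm qi.1)).1
    by_cases hn : n T qm - 1 = 0
    · refine Or.inl ?_
      have := e_zero T qm (idx T qm qi.1) (by show min (qi.1 + 1) (n T qm - 1) = 0; omega)
      rw [this]
    · refine Or.inr ?_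
      have hcons := consec T qm ⟨0, npos T qm⟩ (idx T qm qi.1)
        (by show 0 + 1 = min (qi.1 + 1) (n T qm - 1); omega)
      rwa [e_zero T qm ⟨0, npos T qm⟩ rfl] at hcons
  | (p : Pt T), (q : Pt T) =>
    obtain ⟨pm, pi⟩ := p
    obtain ⟨qm, qi⟩ := q
    have h1 := lt_pt T h.1
    have hm : pm = qm := h1.1
    cases hm
    have hi : pi.1 < qi.1 := h1.2
    have hsucc : pi.1 + 1 = qi.1 := by
      by_contra hne
      have hlt : pi.1 + 1 < L T := by have := qi.2; omega
      exact h.2 (c := WithBot.some ((pm, ⟨pi.1 + 1, hlt⟩) : Pt T))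
        (pt_lt T rfl (show pi.1 < pi.1 + 1 by omega)) (pt_lt T rfl (show pi.1 + 1 < qi.1 by omega))
    show ((e T pm) (idx T pm pi.1)).1 = ((e T pm) (idx T pm qi.1)).1 ∨
      ((e T pm) (idx T pm pi.1)).1 ⋖ ((e T pm) (idx T pm qi.1)).1
    by_cases hcase : pi.1 + 1 < n T pm - 1
    · refine Or.inr (consec T pm (idx T pm pi.1) (idx T pm qi.1) ?_)
      show min (pi.1 + 1) (n T pm - 1) + 1 = min (qi.1 + 1) (n T pm - 1)
      omega
    · refine Or.inl ?_
      have : idx T pm pi.1 = idx T pm qi.1 := by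
        apply Fin.ext
        show min (pi.1 + 1) (n T pm - 1) = min (qi.1 + 1) (n T pm - 1)
        omega
      rw [this]

/-- `R`-lifting -/
lemma lift : ∀ t t' : T.carrier, (t = t' ∨ t ⋖ t') →
    ∃ s s' : Ct T, phi T s = t ∧ phi T s' = t' ∧ (s = s' ∨ s ⋖ s') := by
  intro t t' h
  rcases h with rfl | h
  · obtain ⟨s, hs⟩ := phi_surj T t
    exact ⟨s, s, hs, hs, Or.inl rfl⟩
  · set m := t' with hm
    have ht : t ≤ m := h.1.le
    have ht' : t' ≤ m := le_rfl
    set k := (e T m).symm ⟨t, ht⟩ with hk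
    set k' := (e T m).symm ⟨t', ht'⟩ with hk'
    have hcons : k.1 + 1 = k'.1 := consec' T m h ht ht'
    have hek : ((e T m) k).1 = t := by rw [hk, OrderIso.apply_symm_apply]
    have hek' : ((e T m) k').1 = t' := by rw [hk', OrderIso.apply_symm_apply]
    have hnL := n_le_L T m
    have hk'n := k'.2
    have hkn := k.2
    by_cases h0 : k.1 = 0
    · have hteq : t = ⊥ := by rw [← hek]; exact e_zero T m k h0
      refine ⟨⊥, WithBot.some ((m, ⟨0, Lpos T⟩) : Pt T), ?_, ?_,
        Or.inr (cov_bot_pt T m ⟨0, Lpos T⟩ rfl)⟩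
      · rw [phi_bot, hteq]
      · rw [phi_at T m 0 (Lpos T) k' (by omega)]
        exact hek'
    · refine ⟨WithBot.some ((m, ⟨k.1 - 1, by omega⟩) : Pt T),
        WithBot.some ((m, ⟨k'.1 - 1, by omega⟩) : Pt T), ?_, ?_,
        Or.inr (cov_succ_pt T m ⟨k.1 - 1, by omega⟩ ⟨k'.1 - 1, by omega⟩ (by show k.1 - 1 + 1 = k'.1 - 1; omega))⟩
      · rw [phi_at T m (k.1 - 1) (by omega) k (by omega)]
        exact hek
      · rw [phi_at T m (k'.1 - 1) (by omega) k' (by omega)]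
        exact hek'

end FansAux

/-- The family of finite fans is coinitial in the family of finite rooted trees:
every finite rooted tree is an epimorphic image of a finite fan. -/
theorem fans_coinitial (T : FiniteRootedTree) :
    ∃ (S : FiniteRootedTree) (φ : S.carrier → T.carrier),
      IsFan S ∧ IsTreeEpi S T φ := by
  classical
  refine ⟨FansAux.S T, FansAux.phi T, ⟨?_, ?_⟩, FansAux.phi_surj T, ?_, ?_⟩
  · exact fun s t p hst hts hps hpt hRs hRt =>
      FansAux.fan1 T s t p hst hts hps hpt hRs hRt
  · exact fun b1 b2 h1 h2 => FansAux.fan2 T b1 b2 h1 h2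
  · exact fun s s' h => FansAux.pres T s s' h
  · exact fun t t' h => FansAux.lift T t t' h
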